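/- Let T ∈ ℕ, let Z ⊂ [0,1] be a finite set, let y : {1,…,T} → {0,1}, and let P : {1,…,T} × Z → ℝ≥0 satisfy Σ_{z∈Z} P(t, z) = 1 for every t; define ρ̃_z := (Σ_t P(t,z)·y_t)/(Σ_t P(t,z)) when Σ_t P(t,z) > 0 and ρ̃_z := 0 otherwise. Let f : [0,1] → ℝ be concave with supergradient selection g (f(x) ≤ f(q) + g(q)·(x − q) for all x, q ∈ [0,1]), let ℓ(q, y) := f(q) + g(q)·(y − q), and assume ℓ(q, y) ∈ [−1, 1] for all q ∈ [0,1], y ∈ {0,1}. Then for every swap function σ : Z → [0,1], Σ_{z∈Z} Σ_{t=1}^T P(t,z)·(ℓ(z, y_t) − ℓ(σ(z), y_t)) ≤ 4·Σ_{z∈Z} Σ_{t=1}^T P(t,z)·|z − ρ̃_z|; that is, the pseudo swap regret of any bounded proper loss is at most 4 times the pseudo ℓ₁-calibration error. -/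

import Mathlib

/-- **Pseudo swap regret of a bounded proper loss is at most 4·PCal₁.**
For a proper loss `ℓ(q,y) = f(q) + g(q)·(y − q)` with `f` concave, `g` a
supergradient selection, and `ℓ(q,y) ∈ [−1,1]`, the pseudo swap regret against any
swap function `σ : Z → [0,1]` is at most `4·Σ_z Σ_t P(t,z)·|z − ρ̃_z|`. -/
theorem pseudo_swap_regret_le_four_pcal_one
    (T : ℕ) (Z : Finset ℝ) (hZ : ∀ z ∈ Z, z ∈ Set.Icc (0:ℝ) 1)
    (y : ℕ → ℝ) (hy : ∀ t, y t = 0 ∨ y t = 1)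
    (P : ℕ → ℝ → ℝ) (hP0 : ∀ t z, 0 ≤ P t z)
    (hP1 : ∀ t ∈ Finset.range T, ∑ z ∈ Z, P t z = 1)
    (ρ : ℝ → ℝ)
    (hρ : ∀ z, ρ z = if 0 < ∑ t ∈ Finset.range T, P t z then
        (∑ t ∈ Finset.range T, P t z * y t) / (∑ t ∈ Finset.range T, P t z) else 0)
    (f g : ℝ → ℝ)
    (hconc : ConcaveOn ℝ (Set.Icc (0:ℝ) 1) f)
    (hg : ∀ q ∈ Set.Icc (0:ℝ) 1, ∀ x ∈ Set.Icc (0:ℝ) 1, f x ≤ f q + g q * (x - q))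
    (ℓ : ℝ → ℝ → ℝ) (hℓ : ∀ q y', ℓ q y' = f q + g q * (y' - q))
    (hbdd : ∀ q ∈ Set.Icc (0:ℝ) 1, ∀ y' ∈ ({0, 1} : Set ℝ), ℓ q y' ∈ Set.Icc (-1:ℝ) 1)
    (σ : ℝ → ℝ) (hσ : ∀ z ∈ Z, σ z ∈ Set.Icc (0:ℝ) 1) :
    ∑ z ∈ Z, ∑ t ∈ Finset.range T, P t z * (ℓ z (y t) - ℓ (σ z) (y t))
      ≤ 4 * ∑ z ∈ Z, ∑ t ∈ Finset.range T, P t z * |z - ρ z| := by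
  -- bound on |g q| for q ∈ [0,1]
  have hgbd : ∀ q ∈ Set.Icc (0:ℝ) 1, |g q| ≤ 2 := by
    intro q hq
    have h1 := hbdd q hq 1 (by simp)
    have h0 := hbdd q hq 0 (by simp)
    have e1 : ℓ q 1 - ℓ q 0 = g q := by rw [hℓ, hℓ]; ring
    rw [abs_le]
    constructor <;> nlinarith [h1.1, h1.2, h0.1, h0.2]
  rw [Finset.mul_sum]
  apply Finset.sum_le_sum
  intro z hz
  set S := ∑ t ∈ Finset.range T, P t z with hS
  set W := ∑ t ∈ Finset.range T, P t z * y t with hWdef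
  have hS0 : 0 ≤ S := Finset.sum_nonneg fun t _ => hP0 t z
  have hW : W = S * ρ z := by
    rcases lt_or_eq_of_le hS0 with hpos | hzero
    · rw [hρ z, if_pos hpos]
      field_simp
      rw [← hS, ← hWdef, mul_div_cancel_left₀ _ hpos.ne']
    · have hall : ∀ t ∈ Finset.range T, P t z = 0 := by
        intro t ht
        have := (Finset.sum_eq_zero_iff_of_nonneg (fun t _ => hP0 t z)).mp hzero.symm
        exact this t ht
      have : W = 0 := Finset.sum_eq_zero fun t ht => by rw [hall t ht, zero_mul]
      rw [this, ← hzero, zero_mul]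
  have hρz : ρ z ∈ Set.Icc (0:ℝ) 1 := by
    rw [hρ z]
    split_ifs with hpos
    · have hWnn : 0 ≤ W := Finset.sum_nonneg fun t _ => by
        rcases hy t with h | h <;> simp [h, hP0 t z]
      have hWle : W ≤ S := Finset.sum_le_sum fun t _ => by
        rcases hy t with h | h <;> simp [h, hP0 t z]
      exact ⟨div_nonneg hWnn hS0, (div_le_one hpos).mpr hWle⟩
    · exact ⟨le_refl 0, zero_le_one⟩
  -- expand sums: ∑ P ℓ q (y t) = S * ℓ q (ρ z)
  have expand : ∀ q, ∑ t ∈ Finset.range T, P t z * ℓ q (y t) = S * ℓ q (ρ z) := by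
    intro q
    have step : ∀ t ∈ Finset.range T,
        P t z * ℓ q (y t) = (f q - g q * q) * P t z + g q * (P t z * y t) := by
      intro t _; rw [hℓ]; ring
    rw [Finset.sum_congr rfl step, Finset.sum_add_distrib, ← Finset.mul_sum, ← Finset.mul_sum,
      ← hWdef, hW, hℓ]
    ring
  have expandL : ∑ t ∈ Finset.range T, P t z * (ℓ z (y t) - ℓ (σ z) (y t))
      = S * ℓ z (ρ z) - S * ℓ (σ z) (ρ z) := by
    have : ∀ t ∈ Finset.range T, P t z * (ℓ z (y t) - ℓ (σ z) (y t))
        = P t z * ℓ z (y t) - P t z * ℓ (σ z) (y t) := fun t _ => by ring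
    rw [Finset.sum_congr rfl this, Finset.sum_sub_distrib, expand, expand]
  have expandR : ∑ t ∈ Finset.range T, P t z * |z - ρ z| = S * |z - ρ z| := by
    rw [← Finset.sum_mul]
  rw [expandL, expandR]
  have hzI : z ∈ Set.Icc (0:ℝ) 1 := hZ z hz
  have hqI : σ z ∈ Set.Icc (0:ℝ) 1 := hσ z hz
  -- pointwise bound: ℓ z ρ − ℓ (σ z) ρ ≤ 4|z − ρ|
  have key : ℓ z (ρ z) - ℓ (σ z) (ρ z) ≤ 4 * |z - ρ z| := by
    have h1 : f (ρ z) ≤ f (σ z) + g (σ z) * (ρ z - σ z) := hg (σ z) hqI (ρ z) hρz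
    have h2 : f z ≤ f (ρ z) + g (ρ z) * (z - ρ z) := hg (ρ z) hρz z hzI
    have hgz := hgbd z hzI
    have hgρ := hgbd (ρ z) hρz
    have habs : |z - ρ z| = |ρ z - z| := abs_sub_comm _ _
    have e1 : g (ρ z) * (z - ρ z) ≤ 2 * |z - ρ z| := by
      calc g (ρ z) * (z - ρ z) ≤ |g (ρ z) * (z - ρ z)| := le_abs_self _
        _ = |g (ρ z)| * |z - ρ z| := abs_mul _ _
        _ ≤ 2 * |z - ρ z| := by
            apply mul_le_mul_of_nonneg_right hgρ (abs_nonneg _)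
    have e2 : g z * (ρ z - z) ≤ 2 * |z - ρ z| := by
      calc g z * (ρ z - z) ≤ |g z * (ρ z - z)| := le_abs_self _
        _ = |g z| * |z - ρ z| := by rw [abs_mul, ← habs]
        _ ≤ 2 * |z - ρ z| := by
            apply mul_le_mul_of_nonneg_right hgz (abs_nonneg _)
    rw [hℓ, hℓ]
    nlinarith
  calc S * ℓ z (ρ z) - S * ℓ (σ z) (ρ z) = S * (ℓ z (ρ z) - ℓ (σ z) (ρ z)) := by ring
    _ ≤ S * (4 * |z - ρ z|) := mul_le_mul_of_nonneg_left key hS0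
    _ = 4 * (S * |z - ρ z|) := by ring
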